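/- Let γ = ((i₁ j₁),…,(i_k j_k)) ∈ Σ_n(k) and let l ∈ {1,…,k}. Then j_l = max C_{γ_{l−1}}(j_l), i.e. j_l is the largest element of the cycle of γ_{l−1} containing j_l. -/

import Mathlib

/-- ℓ(σ): the number of cycles (orbits) of σ, including fixed points, counted via the
minimal representative of each orbit. -/
noncomputable def cycleCount {n : ℕ} (σ : Equiv.Perm (Fin n)) : ℕ :=
  Set.ncard {x : Fin n | ∀ y, σ.SameCycle x y → x ≤ y}

/-- |σ| := n − ℓ(σ). -/
noncomputable def normPerm {n : ℕ} (σ : Equiv.Perm (Fin n)) : ℕ := n - cycleCount σ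

/-- σ₁ ≼ σ₂ iff |σ₂| = |σ₁| + |σ₁⁻¹σ₂|. -/
def precLe {n : ℕ} (σ₁ σ₂ : Equiv.Perm (Fin n)) : Prop :=
  normPerm σ₂ = normPerm σ₁ + normPerm (σ₁⁻¹ * σ₂)

/-- Σ_n(k): tuples of k transpositions with |τ₁⋯τ_k| = k and τ₁⋯τ_k ≼ (1 … n). -/
def SigmaSet (n k : ℕ) : Set (Fin k → Equiv.Perm (Fin n)) :=
  {τ | (∀ l, (τ l).IsSwap) ∧ normPerm (List.ofFn τ).prod = k ∧
      precLe (List.ofFn τ).prod (finRotate n)}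

/-- γ_m := τ₁∘⋯∘τ_m, the product of the first m entries of the chain. -/
def gammaP {n k : ℕ} (τ : Fin k → Equiv.Perm (Fin n)) (m : ℕ) : Equiv.Perm (Fin n) :=
  ((List.ofFn τ).take m).prod

namespace Stmt4Aux

open Equiv Equiv.Perm

variable {n : ℕ}

def Mset (σ : Equiv.Perm (Fin n)) : Set (Fin n) := {x : Fin n | ∀ y, σ.SameCycle x y → x ≤ y}

lemma cycleCount_def (σ : Equiv.Perm (Fin n)) : cycleCount σ = (Mset σ).ncard := rfl

lemma cycleCount_le (σ : Equiv.Perm (Fin n)) : cycleCount σ ≤ n := by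
  rw [cycleCount_def]
  have h := Set.ncard_le_ncard (Set.subset_univ (Mset σ)) Set.finite_univ
  simpa [Set.ncard_univ] using h

lemma sameCycle_iff_pow {σ : Equiv.Perm (Fin n)} {x y : Fin n} :
    σ.SameCycle x y ↔ ∃ m : ℕ, (σ ^ m) x = y := by
  constructor
  · intro h; obtain ⟨i, _, h⟩ := h.exists_pow_eq'; exact ⟨i, h⟩
  · rintro ⟨m, rfl⟩; exact ⟨(m : ℤ), by rw [zpow_natCast]⟩

lemma sameCycle_apply_self (σ : Equiv.Perm (Fin n)) (x : Fin n) : σ.SameCycle x (σ x) :=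
  ⟨1, by simp⟩

noncomputable def minOrbit (σ : Equiv.Perm (Fin n)) (x : Fin n) : Fin n :=
  (Set.exists_min_image {y | σ.SameCycle x y} id (Set.toFinite _)
    ⟨x, Equiv.Perm.SameCycle.refl _ _⟩).choose

lemma minOrbit_sameCycle (σ : Equiv.Perm (Fin n)) (x : Fin n) :
    σ.SameCycle x (minOrbit σ x) :=
  (Set.exists_min_image {y | σ.SameCycle x y} id (Set.toFinite _)
    ⟨x, Equiv.Perm.SameCycle.refl _ _⟩).choose_spec.1

lemma minOrbit_le (σ : Equiv.Perm (Fin n)) (x y : Fin n) (h : σ.SameCycle x y) :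
    minOrbit σ x ≤ y :=
  (Set.exists_min_image {y | σ.SameCycle x y} id (Set.toFinite _)
    ⟨x, Equiv.Perm.SameCycle.refl _ _⟩).choose_spec.2 y h

lemma minOrbit_mem (σ : Equiv.Perm (Fin n)) (x : Fin n) : minOrbit σ x ∈ Mset σ := by
  intro y hy
  exact minOrbit_le σ x y ((minOrbit_sameCycle σ x).trans hy)

/-- Join analysis of cycles after multiplying by a swap. -/
lemma sameCycle_mul_swap_cases {σ : Equiv.Perm (Fin n)} {a b x y : Fin n}
    (h : (σ * Equiv.swap a b).SameCycle x y) :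
    σ.SameCycle x y ∨ (σ.SameCycle x a ∧ σ.SameCycle b y) ∨
      (σ.SameCycle x b ∧ σ.SameCycle a y) := by
  rw [sameCycle_iff_pow] at h
  obtain ⟨m, rfl⟩ := h
  induction m with
  | zero => exact Or.inl (Equiv.Perm.SameCycle.refl _ _)
  | succ m ih =>
    have hE : ((σ * Equiv.swap a b) ^ (m + 1)) x
        = σ (Equiv.swap a b (((σ * Equiv.swap a b) ^ m) x)) := by
      rw [pow_succ', Equiv.Perm.mul_apply, Equiv.Perm.mul_apply]
    set z := ((σ * Equiv.swap a b) ^ m) x with hz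
    rcases eq_or_ne z a with hza | hza
    · rw [hE, hza, Equiv.swap_apply_left]
      rcases ih with h | ⟨h1, h2⟩ | ⟨h1, h2⟩
      · exact Or.inr (Or.inl ⟨hza ▸ h, sameCycle_apply_self σ b⟩)
      · exact Or.inl ((h1.trans (hza ▸ h2 : σ.SameCycle b a).symm).trans (sameCycle_apply_self σ b))
      · exact Or.inl (h1.trans (sameCycle_apply_self σ b))
    · rcases eq_or_ne z b with hzb | hzb
      · rw [hE, hzb, Equiv.swap_apply_right]
        rcases ih with h | ⟨h1, h2⟩ | ⟨h1, h2⟩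
        · exact Or.inr (Or.inr ⟨hzb ▸ h, sameCycle_apply_self σ a⟩)
        · exact Or.inl (h1.trans (sameCycle_apply_self σ a))
        · exact Or.inl ((h1.trans (hzb ▸ h2 : σ.SameCycle a b).symm).trans (sameCycle_apply_self σ a))
      · rw [hE, Equiv.swap_apply_of_ne_of_ne hza hzb]
        rcases ih with h | ⟨h1, h2⟩ | ⟨h1, h2⟩
        · exact Or.inl (h.trans (sameCycle_apply_self σ z))
        · exact Or.inr (Or.inl ⟨h1, h2.trans (sameCycle_apply_self σ z)⟩)
        · exact Or.inr (Or.inr ⟨h1, h2.trans (sameCycle_apply_self σ z)⟩)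

/-- If a and b are in the same σ-cycle, cycles of σ * swap a b refine cycles of σ. -/
lemma sameCycle_of_mul_swap {σ : Equiv.Perm (Fin n)} {a b x y : Fin n}
    (hab : σ.SameCycle a b) (h : (σ * Equiv.swap a b).SameCycle x y) : σ.SameCycle x y := by
  rcases sameCycle_mul_swap_cases h with h | ⟨h1, h2⟩ | ⟨h1, h2⟩
  · exact h
  · exact (h1.trans hab).trans h2
  · exact (h1.trans hab.symm).trans h2

lemma mset_subset_of_sameCycle {σ : Equiv.Perm (Fin n)} {a b : Fin n}
    (hab : σ.SameCycle a b) : Mset σ ⊆ Mset (σ * Equiv.swap a b) :=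
  fun x hx y hy => hx y (sameCycle_of_mul_swap hab hy)

/-- F1: multiplying by a swap decreases the cycle count by at most one. -/
lemma cycleCount_le_mul_swap_add_one (σ : Equiv.Perm (Fin n)) (a b : Fin n) :
    cycleCount σ ≤ cycleCount (σ * Equiv.swap a b) + 1 := by
  set σ' := σ * Equiv.swap a b with hσ'
  set μ := minOrbit σ a with hμ
  have hmap : ∀ x ∈ Mset σ \ {μ}, minOrbit σ' x ∈ Mset σ' := fun x _ => minOrbit_mem σ' x
  have hinj : Set.InjOn (minOrbit σ') (Mset σ \ {μ}) := by
    rintro x ⟨hx, hxμ⟩ y ⟨hy, hyμ⟩ hxy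
    have hxy' : σ'.SameCycle x y :=
      (minOrbit_sameCycle σ' x).trans (hxy ▸ (minOrbit_sameCycle σ' y).symm)
    rcases sameCycle_mul_swap_cases hxy' with h | ⟨h1, _⟩ | ⟨_, h2⟩
    · exact le_antisymm (hx _ h) (hy _ h.symm)
    · exfalso
      apply hxμ
      have hax : σ.SameCycle a x := h1.symm
      have e1 : μ ≤ x := minOrbit_le σ a x hax
      have e2 : x ≤ μ := hx μ (h1.trans (minOrbit_sameCycle σ a))
      simp [le_antisymm e2 e1]
    · exfalso
      apply hyμ
      have hay : σ.SameCycle a y := h2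
      have e1 : μ ≤ y := minOrbit_le σ a y hay
      have e2 : y ≤ μ := hy μ (h2.symm.trans (minOrbit_sameCycle σ a))
      simp [le_antisymm e2 e1]
  have h1 : (Mset σ \ {μ}).ncard ≤ (Mset σ').ncard :=
    Set.ncard_le_ncard_of_injOn (minOrbit σ') hmap hinj (Set.toFinite _)
  have h2 : (Mset σ).ncard ≤ (Mset σ \ {μ}).ncard + 1 := by
    have hsub : Mset σ ⊆ (Mset σ \ {μ}) ∪ {μ} := by
      intro x hx
      by_cases h : x = μ <;> simp [h, hx]
    calc (Mset σ).ncard ≤ ((Mset σ \ {μ}) ∪ {μ}).ncard :=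
          Set.ncard_le_ncard hsub (Set.toFinite _)
      _ ≤ (Mset σ \ {μ}).ncard + ({μ} : Set (Fin n)).ncard := Set.ncard_union_le _ _
      _ = (Mset σ \ {μ}).ncard + 1 := by rw [Set.ncard_singleton]
  rw [cycleCount_def, cycleCount_def]
  omega

lemma normPerm_mul_swap_le (σ : Equiv.Perm (Fin n)) (a b : Fin n) :
    normPerm (σ * Equiv.swap a b) ≤ normPerm σ + 1 := by
  have h := cycleCount_le_mul_swap_add_one σ a b
  unfold normPerm
  omega

/-- W: if a,b lie in different cycles, the swap merges them. -/
lemma sameCycle_mul_swap_of_not {σ : Equiv.Perm (Fin n)} {a b : Fin n}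
    (hab : a ≠ b) (h : ¬ σ.SameCycle a b) : (σ * Equiv.swap a b).SameCycle a b := by
  have hex : ∃ p, 0 < p ∧ (σ ^ p) b = b :=
    ⟨orderOf σ, orderOf_pos σ, by rw [pow_orderOf_eq_one]; rfl⟩
  classical
  set p := Nat.find hex with hp
  obtain ⟨hp0, hpb⟩ := Nat.find_spec hex
  have hmin : ∀ s, 0 < s → s < p → (σ ^ s) b ≠ b := fun s hs hsp hb =>
    Nat.find_min hex hsp ⟨hs, hb⟩
  have key : ∀ s, 0 < s → s ≤ p → ((σ * Equiv.swap a b) ^ s) a = (σ ^ s) b := by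
    intro s
    induction s with
    | zero => omega
    | succ s ih =>
      intro _ hsp
      rcases Nat.eq_zero_or_pos s with rfl | hs
      · simp [Equiv.Perm.mul_apply]
      · have hz := ih hs (le_trans (Nat.le_succ s) hsp)
        have h1 : (σ ^ s) b ≠ b := hmin s hs (lt_of_lt_of_le (Nat.lt_succ_self s) hsp)
        have h2 : (σ ^ s) b ≠ a := by
          intro hE
          exact h (Equiv.Perm.SameCycle.symm ⟨(s : ℤ), by rw [zpow_natCast, hE]⟩)
        have : ((σ * Equiv.swap a b) ^ (s + 1)) a
            = σ (Equiv.swap a b (((σ * Equiv.swap a b) ^ s) a)) := by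
          rw [pow_succ', Equiv.Perm.mul_apply, Equiv.Perm.mul_apply]
        rw [this, hz, Equiv.swap_apply_of_ne_of_ne h2 h1, pow_succ', Equiv.Perm.mul_apply]
  have : ((σ * Equiv.swap a b) ^ p) a = b := by rw [key p hp0 (le_refl p), hpb]
  exact ⟨(p : ℤ), by rw [zpow_natCast, this]⟩

/-- Strict split: multiplying by swap a (σ a) strictly increases the cycle count. -/
lemma cycleCount_lt_mul_swap (σ : Equiv.Perm (Fin n)) (a : Fin n) (ha : σ a ≠ a) :
    cycleCount σ < cycleCount (σ * Equiv.swap a (σ a)) := by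
  set b := σ a with hb'
  set σ' := σ * Equiv.swap a b with hσ'
  have hab : σ.SameCycle a b := sameCycle_apply_self σ a
  have hsub : Mset σ ⊆ Mset σ' := mset_subset_of_sameCycle hab
  have hb : σ' b = b := by
    rw [hσ', Equiv.Perm.mul_apply, Equiv.swap_apply_right]
  have hfix : ∀ y, σ'.SameCycle b y → y = b := by
    intro y hy
    obtain ⟨m, hm⟩ := hy
    rw [Equiv.Perm.zpow_apply_eq_self_of_apply_eq_self hb m] at hm
    exact hm.symm
  have hbM : b ∈ Mset σ' := fun y hy => le_of_eq (hfix y hy).symm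
  have hμM : minOrbit σ' a ∈ Mset σ' := minOrbit_mem _ _
  have hne : minOrbit σ' a ≠ b := by
    intro hE
    have h1 : σ'.SameCycle a b := hE ▸ minOrbit_sameCycle σ' a
    have : a = b := hfix a h1.symm
    exact ha this.symm
  have hw : b ∉ Mset σ ∨ minOrbit σ' a ∉ Mset σ := by
    by_contra hcon
    push_neg at hcon
    obtain ⟨h1, h2⟩ := hcon
    have h3 : σ.SameCycle a (minOrbit σ' a) :=
      sameCycle_of_mul_swap hab (minOrbit_sameCycle σ' a)
    have h4 : σ.SameCycle b (minOrbit σ' a) := hab.symm.trans h3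
    exact hne (le_antisymm (h2 b h4.symm) (h1 _ h4))
  have hss : Mset σ ⊂ Mset σ' := by
    refine ⟨hsub, fun hsup => ?_⟩
    rcases hw with hcase | hcase
    · exact hcase (hsup hbM)
    · exact hcase (hsup hμM)
  rw [cycleCount_def, cycleCount_def]
  exact Set.ncard_lt_ncard hss (Set.toFinite _)

lemma cycleCount_one : cycleCount (1 : Equiv.Perm (Fin n)) = n := by
  have hM : Mset (1 : Equiv.Perm (Fin n)) = Set.univ := by
    ext x
    simp only [Mset, Set.mem_setOf_eq, Set.mem_univ, iff_true]
    intro y hy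
    rw [Equiv.Perm.sameCycle_one] at hy
    exact le_of_eq hy
  rw [cycleCount_def, hM, Set.ncard_univ]
  simp

lemma normPerm_one : normPerm (1 : Equiv.Perm (Fin n)) = 0 := by
  unfold normPerm
  rw [cycleCount_one]
  omega

lemma eq_one_of_normPerm_eq_zero (σ : Equiv.Perm (Fin n)) (h : normPerm σ = 0) : σ = 1 := by
  have hcle := cycleCount_le σ
  have hc : n ≤ cycleCount σ := by unfold normPerm at h; omega
  have huniv : Mset σ = Set.univ := by
    refine (Set.eq_of_subset_of_ncard_le (Set.subset_univ _) ?_ Set.finite_univ)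
    rw [Set.ncard_univ]
    simpa [cycleCount_def] using hc
  have hle : ∀ x : Fin n, (x : ℕ) ≤ ((σ x : Fin n) : ℕ) := by
    intro x
    have hx : x ∈ Mset σ := huniv ▸ Set.mem_univ x
    exact hx (σ x) (sameCycle_apply_self σ x)
  have hsum : ∑ x : Fin n, ((x : Fin n) : ℕ) = ∑ x : Fin n, ((σ x : Fin n) : ℕ) :=
    (Equiv.sum_comp σ (fun x : Fin n => (x : ℕ))).symm
  have hall := (Finset.sum_eq_sum_iff_of_le (fun i _ => hle i)).1 hsum
  exact Equiv.ext fun x => by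
    simpa using (Fin.val_injective (hall x (Finset.mem_univ x))).symm

/-- L2: every permutation is a product of normPerm σ transpositions. -/
lemma exists_swap_list : ∀ (N : ℕ) (σ : Equiv.Perm (Fin n)), normPerm σ = N →
    ∃ L : List (Equiv.Perm (Fin n)),
      (∀ τ ∈ L, ∃ a b : Fin n, a ≠ b ∧ τ = Equiv.swap a b) ∧ L.length = N ∧ L.prod = σ := by
  intro N
  induction N with
  | zero =>
    intro σ h
    exact ⟨[], by simp, rfl, by rw [List.prod_nil, eq_one_of_normPerm_eq_zero σ h]⟩
  | succ N ih =>
    intro σ h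
    have hσ1 : σ ≠ 1 := by
      intro hE
      rw [hE, normPerm_one] at h
      omega
    have hexa : ∃ a, σ a ≠ a := by
      by_contra hcon
      push_neg at hcon
      exact hσ1 (Equiv.ext hcon)
    obtain ⟨a, ha⟩ := hexa
    set τ := Equiv.swap a (σ a) with hτ
    set σ' := σ * τ with hσ'2
    have hE : σ' * τ = σ := by rw [hσ'2, mul_assoc, hτ, Equiv.swap_mul_self, mul_one]
    have h1 : cycleCount σ < cycleCount σ' := cycleCount_lt_mul_swap σ a ha
    have h2 : normPerm σ ≤ normPerm σ' + 1 := by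
      have := hE ▸ normPerm_mul_swap_le σ' a (σ a)
      unfold normPerm at *
      omega
    have hble : cycleCount σ' ≤ n := cycleCount_le _
    have h3 : normPerm σ' = N := by unfold normPerm at *; omega
    obtain ⟨L, hL1, hL2, hL3⟩ := ih σ' h3
    refine ⟨L ++ [τ], ?_, by simp [hL2], ?_⟩
    · intro τ' hτ'
      rcases List.mem_append.1 hτ' with hm | hm
      · exact hL1 _ hm
      · simp only [List.mem_singleton] at hm
        exact ⟨a, σ a, Ne.symm ha, by rw [hm, hτ]⟩
    · rw [List.prod_append, List.prod_singleton, hL3, hE]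

lemma normPerm_mul_list_le : ∀ (L : List (Equiv.Perm (Fin n))),
    (∀ τ ∈ L, ∃ a b : Fin n, a ≠ b ∧ τ = Equiv.swap a b) →
    ∀ ρ : Equiv.Perm (Fin n), normPerm (ρ * L.prod) ≤ normPerm ρ + L.length := by
  intro L
  induction L with
  | nil => intro _ ρ; simp
  | cons τ L ih =>
    intro hL ρ
    obtain ⟨a, b, hab, rfl⟩ := hL τ (List.mem_cons_self)
    have h1 : normPerm (ρ * Equiv.swap a b) ≤ normPerm ρ + 1 := normPerm_mul_swap_le ρ a b
    have h2 := ih (fun τ' h => hL τ' (List.mem_cons_of_mem _ h)) (ρ * Equiv.swap a b)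
    calc normPerm (ρ * (Equiv.swap a b :: L).prod)
        = normPerm ((ρ * Equiv.swap a b) * L.prod) := by rw [List.prod_cons, mul_assoc]
      _ ≤ normPerm (ρ * Equiv.swap a b) + L.length := h2
      _ ≤ normPerm ρ + (Equiv.swap a b :: L).length := by
          rw [List.length_cons]; omega

lemma normPerm_mul_le (ρ π : Equiv.Perm (Fin n)) :
    normPerm (ρ * π) ≤ normPerm ρ + normPerm π := by
  obtain ⟨L, h1, h2, h3⟩ := exists_swap_list (normPerm π) π rfl
  have := normPerm_mul_list_le L h1 ρ
  rw [h3, h2] at this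
  exact this

/-- Cyclic-successor property: on each cycle, the permutation maps each point to the
least larger element of its cycle, wrapping around at the maximum. -/
def CS (π : Equiv.Perm (Fin n)) : Prop :=
  ∀ x y : Fin n, π.SameCycle x y →
    (x < y → x < π x ∧ π x ≤ y) ∧ (y < x → π x ≤ y ∨ x < π x)

lemma cs_finRotate : ∀ {n : ℕ}, CS (finRotate n)
  | 0 => fun x => x.elim0
  | n + 1 => by
    intro x y _
    rw [finRotate_succ_apply]
    have h1 : ((x + 1 : Fin (n + 1)) : ℕ) = if x = Fin.last n then 0 else (x : ℕ) + 1 :=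
      Fin.val_add_one x
    have hy := y.isLt
    have hx := x.isLt
    have hL : ((Fin.last n : Fin (n + 1)) : ℕ) = n := rfl
    by_cases hlast : x = Fin.last n
    · rw [if_pos hlast] at h1
      have hxv : (x : ℕ) = n := by rw [hlast]; rfl
      constructor
      · intro hlt
        exfalso
        have hv := Fin.lt_def.1 hlt
        rw [hxv] at hv
        omega
      · intro _
        left
        rw [Fin.le_def, h1]
        omega
    · rw [if_neg hlast] at h1
      have hxn : (x : ℕ) < n := by
        rcases Nat.lt_or_ge (x : ℕ) n with hc | hc
        · exact hc
        · exact absurd (Fin.ext (by omega : (x : ℕ) = (Fin.last n : ℕ))) hlast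
      constructor
      · intro hlt
        have := Fin.lt_def.1 hlt
        exact ⟨Fin.lt_def.2 (by omega), Fin.le_def.2 (by omega)⟩
      · intro _
        right
        exact Fin.lt_def.2 (by omega)

/-- Interval invariance: if π is cyclic-successor and a < b lie on a common π-cycle,
then the (π * swap a b)-cycle of b is contained in the half-open interval (a, b]. -/
lemma orbit_le_of_cs {π : Equiv.Perm (Fin n)} {a b : Fin n}
    (hCS : CS π) (hab : π.SameCycle a b) (hlt : a < b) :
    ∀ y, (π * Equiv.swap a b).SameCycle b y → a < y ∧ y ≤ b := by
  set σ := π * Equiv.swap a b with hσ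
  have hstep : ∀ z, a < z → z ≤ b → π.SameCycle b z →
      a < σ z ∧ σ z ≤ b ∧ π.SameCycle b (σ z) := by
    intro z h1 h2 h3
    rcases lt_or_eq_of_le h2 with h2' | h2'
    · have hza : z ≠ a := ne_of_gt h1
      have hzb : z ≠ b := ne_of_lt h2'
      have hE : σ z = π z := by
        rw [hσ, Equiv.Perm.mul_apply, Equiv.swap_apply_of_ne_of_ne hza hzb]
      have hc := (hCS z b h3.symm).1 h2'
      exact ⟨hE ▸ lt_trans h1 hc.1, hE ▸ hc.2, hE ▸ h3.trans (sameCycle_apply_self π z)⟩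
    · subst h2'
      have hE : σ z = π a := by
        rw [hσ, Equiv.Perm.mul_apply, Equiv.swap_apply_right]
      have hc := (hCS a z hab).1 hlt
      exact ⟨hE ▸ hc.1, hE ▸ hc.2, hE ▸ hab.symm.trans (sameCycle_apply_self π a)⟩
  have hiter : ∀ m : ℕ, a < (σ ^ m) b ∧ (σ ^ m) b ≤ b ∧ π.SameCycle b ((σ ^ m) b) := by
    intro m
    induction m with
    | zero => exact ⟨by simpa using hlt, by simp, by simpa using Equiv.Perm.SameCycle.refl π b⟩
    | succ m ih =>
      obtain ⟨i1, i2, i3⟩ := ih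
      have hE : (σ ^ (m + 1)) b = σ ((σ ^ m) b) := by
        rw [pow_succ', Equiv.Perm.mul_apply]
      obtain ⟨j1, j2, j3⟩ := hstep _ i1 i2 i3
      exact ⟨hE ▸ j1, hE ▸ j2, hE ▸ j3⟩
  intro y hy
  obtain ⟨m, hm⟩ := sameCycle_iff_pow.1 hy
  obtain ⟨i1, i2, _⟩ := hiter m
  exact ⟨hm ▸ i1, hm ▸ i2⟩

/-- The (π * swap a b)-cycle of a avoids the interval (a, b]. -/
lemma orbit_a_avoid {π : Equiv.Perm (Fin n)} {a b : Fin n}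
    (hCS : CS π) (hab : π.SameCycle a b) (hlt : a < b) :
    ∀ y, (π * Equiv.swap a b).SameCycle a y → ¬(a < y ∧ y ≤ b) := by
  set σ := π * Equiv.swap a b with hσ
  rintro y hy ⟨hy1, hy2⟩
  have hstep : ∀ z, a < z → z ≤ b → π.SameCycle b z →
      a < σ z ∧ σ z ≤ b ∧ π.SameCycle b (σ z) := by
    intro z h1 h2 h3
    rcases lt_or_eq_of_le h2 with h2' | h2'
    · have hza : z ≠ a := ne_of_gt h1
      have hzb : z ≠ b := ne_of_lt h2'
      have hE : σ z = π z := by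
        rw [hσ, Equiv.Perm.mul_apply, Equiv.swap_apply_of_ne_of_ne hza hzb]
      have hc := (hCS z b h3.symm).1 h2'
      exact ⟨hE ▸ lt_trans h1 hc.1, hE ▸ hc.2, hE ▸ h3.trans (sameCycle_apply_self π z)⟩
    · subst h2'
      have hE : σ z = π a := by
        rw [hσ, Equiv.Perm.mul_apply, Equiv.swap_apply_right]
      have hc := (hCS a z hab).1 hlt
      exact ⟨hE ▸ hc.1, hE ▸ hc.2, hE ▸ hab.symm.trans (sameCycle_apply_self π a)⟩
  have hyb : π.SameCycle b y := hab.symm.trans (sameCycle_of_mul_swap hab hy)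
  have hiter : ∀ m : ℕ, a < (σ ^ m) y ∧ (σ ^ m) y ≤ b ∧ π.SameCycle b ((σ ^ m) y) := by
    intro m
    induction m with
    | zero => exact ⟨by simpa using hy1, by simpa using hy2, by simpa using hyb⟩
    | succ m ih =>
      obtain ⟨i1, i2, i3⟩ := ih
      have hE : (σ ^ (m + 1)) y = σ ((σ ^ m) y) := by
        rw [pow_succ', Equiv.Perm.mul_apply]
      obtain ⟨j1, j2, j3⟩ := hstep _ i1 i2 i3
      exact ⟨hE ▸ j1, hE ▸ j2, hE ▸ j3⟩
  obtain ⟨m, hm⟩ := sameCycle_iff_pow.1 hy.symm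
  obtain ⟨i1, _, _⟩ := hiter m
  rw [hm] at i1
  exact lt_irrefl a i1

/-- Splitting a cyclic-successor permutation along a chord of a cycle stays cyclic-successor. -/
lemma cs_mul_swap {π : Equiv.Perm (Fin n)} {a b : Fin n}
    (hCS : CS π) (hab : π.SameCycle a b) (hlt : a < b) :
    CS (π * Equiv.swap a b) := by
  set σ := π * Equiv.swap a b with hσ
  have hD1 : ∀ x y : Fin n, σ.SameCycle x y → π.SameCycle x y :=
    fun x y h => sameCycle_of_mul_swap hab h
  have hD3 := orbit_le_of_cs hCS hab hlt
  have hD5 := orbit_a_avoid hCS hab hlt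
  intro x y hxy
  by_cases hxb : x = b
  · subst hxb
    have hE : σ x = π a := by
      rw [hσ, Equiv.Perm.mul_apply, Equiv.swap_apply_right]
    obtain ⟨hy1, hy2⟩ := hD3 y hxy
    constructor
    · intro hlt2
      exact absurd hlt2 (not_lt.2 hy2)
    · intro hlt2
      left
      have hay : π.SameCycle a y := hab.trans (hD1 _ _ hxy)
      rw [hE]
      exact ((hCS a y hay).1 hy1).2
  · by_cases hxa : x = a
    · subst hxa
      have hE : σ x = π b := by
        rw [hσ, Equiv.Perm.mul_apply, Equiv.swap_apply_left]
      have hby : π.SameCycle b y := hab.symm.trans (hD1 _ _ hxy)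
      constructor
      · intro hlt2
        have hyb : b < y := by
          rcases le_or_gt y b with hc | hc
          · exact absurd ⟨hlt2, hc⟩ (hD5 y hxy)
          · exact hc
        have hc := (hCS b y hby).1 hyb
        exact ⟨hE ▸ lt_trans hlt hc.1, hE ▸ hc.2⟩
      · intro hlt2
        have hc := (hCS b y hby).2 (lt_trans hlt2 hlt)
        rcases hc with hc | hc
        · exact Or.inl (hE ▸ hc)
        · exact Or.inr (hE ▸ lt_trans hlt hc)
    · have hE : σ x = π x := by
        rw [hσ, Equiv.Perm.mul_apply, Equiv.swap_apply_of_ne_of_ne hxa hxb]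
      have hπ := hCS x y (hD1 _ _ hxy)
      rw [hE]
      exact hπ

/-- Downward induction: any permutation below the long cycle in absolute order
is cyclic-successor. -/
lemma cs_of_prec : ∀ (d : ℕ) (π : Equiv.Perm (Fin n)),
    normPerm (finRotate n) = normPerm π + normPerm (π⁻¹ * finRotate n) →
    normPerm (π⁻¹ * finRotate n) = d → CS π := by
  intro d
  induction d with
  | zero =>
    intro π _ h2
    have h3 : π⁻¹ * finRotate n = 1 := eq_one_of_normPerm_eq_zero _ h2
    have h4 : π = finRotate n := by
      have := congrArg (fun ρ => π * ρ) h3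
      simpa [← mul_assoc] using this.symm
    rw [h4]
    exact cs_finRotate
  | succ d ih =>
    intro π h1 h2
    obtain ⟨L, hL1, hL2, hL3⟩ := exists_swap_list (d + 1) (π⁻¹ * finRotate n) h2
    cases L with
    | nil => simp at hL2
    | cons τ L₂ =>
      obtain ⟨a, b, hab, hτ⟩ := hL1 τ (List.mem_cons_self)
      simp only [List.length_cons, Nat.succ_inj] at hL2
      have key : ∀ a b : Fin n, a < b → τ = Equiv.swap a b → CS π := by
        intro a b hltab hτ2
        set π₂ := π * Equiv.swap a b with hπ₂
        have hπeq : π = π₂ * Equiv.swap a b := by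
          rw [hπ₂, mul_assoc, Equiv.swap_mul_self, mul_one]
        have hc : π₂⁻¹ * finRotate n = L₂.prod := by
          rw [hπ₂, mul_inv_rev, Equiv.swap_inv, mul_assoc]
          rw [show π⁻¹ * finRotate n = τ * L₂.prod from by rw [← List.prod_cons, hL3]]
          rw [hτ2, ← mul_assoc, Equiv.swap_mul_self, one_mul]
        have hL2' : ∀ τ' ∈ L₂, ∃ a b : Fin n, a ≠ b ∧ τ' = Equiv.swap a b :=
          fun τ' h => hL1 τ' (List.mem_cons_of_mem _ h)
        have hb2 : normPerm (π₂⁻¹ * finRotate n) ≤ d := by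
          rw [hc]
          have := normPerm_mul_list_le L₂ hL2' 1
          rw [one_mul, normPerm_one, hL2] at this
          omega
        have hsub2 : normPerm (finRotate n) ≤ normPerm π₂ + normPerm (π₂⁻¹ * finRotate n) := by
          have := normPerm_mul_le π₂ (π₂⁻¹ * finRotate n)
          rwa [mul_inv_cancel_left] at this
        have hF1 : normPerm π₂ ≤ normPerm π + 1 := normPerm_mul_swap_le π a b
        have e1 : normPerm π₂ = normPerm π + 1 := by omega
        have e2 : normPerm (π₂⁻¹ * finRotate n) = d := by omega
        have e3 : normPerm (finRotate n) = normPerm π₂ + normPerm (π₂⁻¹ * finRotate n) := by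
          omega
        have hCS2 : CS π₂ := ih π₂ e3 e2
        have habc : π₂.SameCycle a b := by
          by_contra hnot
          have hW : (π₂ * Equiv.swap a b).SameCycle a b :=
            sameCycle_mul_swap_of_not (ne_of_lt hltab) hnot
          rw [← hπeq] at hW
          have hsubM : Mset π ⊆ Mset π₂ := hπ₂ ▸ mset_subset_of_sameCycle hW
          have hcard : cycleCount π ≤ cycleCount π₂ := by
            rw [cycleCount_def, cycleCount_def]
            exact Set.ncard_le_ncard hsubM (Set.toFinite _)
          have hb1 : cycleCount π₂ ≤ n := cycleCount_le _
          have hb0 : cycleCount π ≤ n := cycleCount_le _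
          unfold normPerm at e1
          omega
        have := cs_mul_swap hCS2 habc hltab
        rwa [← hπeq] at this
      rcases hab.lt_or_gt with hltab | hltab
      · exact key a b hltab hτ
      · exact key b a hltab (by rw [Equiv.swap_comm]; exact hτ)

end Stmt4Aux

/-- If γ = ((i₁ j₁),…,(i_k j_k)) ∈ Σ_n(k) and l ∈ {1,…,k}, then j_l is the largest element of
the cycle of γ_{l−1} containing j_l. -/
theorem stmt4 (n k : ℕ) (i j : Fin k → Fin n) (hij : ∀ l, i l < j l)
    (hγ : (fun l => Equiv.swap (i l) (j l)) ∈ SigmaSet n k) (l : Fin k) :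
    ∀ y, (gammaP (fun m => Equiv.swap (i m) (j m)) (l : ℕ)).SameCycle (j l) y → y ≤ j l := by
  classical
  open Stmt4Aux in
  obtain ⟨hswap, hnorm, hprec⟩ := hγ
  set τf : Fin k → Equiv.Perm (Fin n) := fun m => Equiv.swap (i m) (j m) with hτf
  set c : Equiv.Perm (Fin n) := finRotate n with hc
  set L : List (Equiv.Perm (Fin n)) := List.ofFn τf with hL
  have hlen : L.length = k := by rw [hL, List.length_ofFn]
  have hswapL : ∀ τ ∈ L, ∃ a b : Fin n, a ≠ b ∧ τ = Equiv.swap a b := by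
    intro τ hτ
    rw [hL, List.mem_ofFn] at hτ
    obtain ⟨m, hm⟩ := hτ
    exact ⟨i m, j m, ne_of_lt (hij m), hm.symm⟩
  have hprec' : normPerm c = normPerm L.prod + normPerm (L.prod⁻¹ * c) := hprec
  have hA : ∀ m : ℕ, normPerm (gammaP τf m) ≤ m := by
    intro m
    have hsub : ∀ τ ∈ L.take m, ∃ a b : Fin n, a ≠ b ∧ τ = Equiv.swap a b :=
      fun τ h => hswapL τ (List.take_subset _ _ h)
    have h := normPerm_mul_list_le (L.take m) hsub 1
    rw [one_mul, normPerm_one, List.length_take] at h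
    have hg : gammaP τf m = (L.take m).prod := rfl
    rw [hg]
    omega
  have hB : ∀ m : ℕ, normPerm ((gammaP τf m)⁻¹ * L.prod) ≤ k - m := by
    intro m
    have hsplit : (L.take m).prod * (L.drop m).prod = L.prod :=
      List.prod_take_mul_prod_drop L m
    have hinv : (gammaP τf m)⁻¹ * L.prod = (L.drop m).prod := by
      rw [show gammaP τf m = (L.take m).prod from rfl, ← hsplit, inv_mul_cancel_left]
    rw [hinv]
    have hsub : ∀ τ ∈ L.drop m, ∃ a b : Fin n, a ≠ b ∧ τ = Equiv.swap a b :=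
      fun τ h => hswapL τ (List.drop_subset _ _ h)
    have h := normPerm_mul_list_le (L.drop m) hsub 1
    rw [one_mul, normPerm_one, List.length_drop, hlen] at h
    omega
  have hC : ∀ ρ : Equiv.Perm (Fin n), normPerm c ≤ normPerm ρ + normPerm (ρ⁻¹ * c) := by
    intro ρ
    have h := normPerm_mul_le ρ (ρ⁻¹ * c)
    rwa [mul_inv_cancel_left] at h
  have hD : ∀ m : ℕ, normPerm ((gammaP τf m)⁻¹ * c)
      ≤ normPerm ((gammaP τf m)⁻¹ * L.prod) + normPerm (L.prod⁻¹ * c) := by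
    intro m
    have h := normPerm_mul_le ((gammaP τf m)⁻¹ * L.prod) (L.prod⁻¹ * c)
    rwa [mul_assoc, mul_inv_cancel_left] at h
  have hE : ∀ m : ℕ, k ≤ normPerm (gammaP τf m) + normPerm ((gammaP τf m)⁻¹ * L.prod) := by
    intro m
    have h := normPerm_mul_le (gammaP τf m) ((gammaP τf m)⁻¹ * L.prod)
    rw [mul_inv_cancel_left] at h
    omega
  have keyfact : ∀ m : ℕ, m ≤ k → normPerm (gammaP τf m) = m ∧
      normPerm c = normPerm (gammaP τf m) + normPerm ((gammaP τf m)⁻¹ * c) := by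
    intro m hm
    have a1 := hA m
    have a2 := hB m
    have a3 := hC (gammaP τf m)
    have a4 := hD m
    have a5 := hE m
    omega
  set a : Fin n := i l with ha
  set b : Fin n := j l with hb
  set σ : Equiv.Perm (Fin n) := gammaP τf (l : ℕ) with hσ
  set π : Equiv.Perm (Fin n) := gammaP τf ((l : ℕ) + 1) with hπ
  have hlk : (l : ℕ) < L.length := by rw [hlen]; exact l.isLt
  have hstep : π = σ * Equiv.swap a b := by
    rw [hπ, hσ]
    show (L.take ((l : ℕ) + 1)).prod = (L.take (l : ℕ)).prod * Equiv.swap a b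
    rw [List.prod_take_succ L (l : ℕ) hlk]
    congr 1
    show (List.ofFn τf)[(l : ℕ)]'(hL ▸ hlk) = Equiv.swap a b
    rw [List.getElem_ofFn]
  have hσn : normPerm σ = (l : ℕ) := (keyfact (l : ℕ) (le_of_lt l.isLt)).1
  have hπn : normPerm π = (l : ℕ) + 1 := (keyfact ((l : ℕ) + 1) l.isLt).1
  have hπprec : normPerm c = normPerm π + normPerm (π⁻¹ * c) :=
    (keyfact ((l : ℕ) + 1) l.isLt).2
  have hCSπ : CS π := cs_of_prec (normPerm (π⁻¹ * c)) π hπprec rfl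
  have hnots : ¬ σ.SameCycle a b := by
    intro hcon
    have hsubM : Mset σ ⊆ Mset π := hstep ▸ mset_subset_of_sameCycle hcon
    have h1 : cycleCount σ ≤ cycleCount π := by
      rw [cycleCount_def, cycleCount_def]
      exact Set.ncard_le_ncard hsubM (Set.toFinite _)
    have h2 : cycleCount σ ≤ n := cycleCount_le _
    have h3 : cycleCount π ≤ n := cycleCount_le _
    unfold normPerm at hσn hπn
    omega
  have habπ : π.SameCycle a b := by
    have h := sameCycle_mul_swap_of_not (ne_of_lt (hij l)) hnots
    rwa [← hstep] at h
  have hback : σ = π * Equiv.swap a b := by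
    rw [hstep, mul_assoc, Equiv.swap_mul_self, mul_one]
  intro y hy
  exact (orbit_le_of_cs hCSπ habπ (hij l) y (hback ▸ hy)).2
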